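/- Let μ = N(m_1, Σ) and ν = N(m_2, Σ) be Gaussian measures on ℝ^d with the same positive definite covariance Σ, and let 0 ≤ ε < 1/2. Then DR_{2,ε}(μ,ν) = DR_{1,ε}(μ,ν) = ‖m_1 − m_2‖, where the depth-region discrepancies are computed with the halfspace depth; in particular, for every α ∈ (ε, 1/2] the Hausdorff distance between the halfspace depth regions satisfies d_H(D_μ^α, D_ν^α) = ‖m_1 − m_2‖. -/

import Mathlib

open MeasureTheory ProbabilityTheory
open scoped RealInnerProductSpace

/-- The halfspace (Tukey) depth of `x` w.r.t. a measure `ρ` on `ℝ^d`. -/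
noncomputable def halfspaceDepth (d : ℕ) (ρ : Measure (EuclideanSpace ℝ (Fin d)))
    (x : EuclideanSpace ℝ (Fin d)) : ℝ :=
  ⨅ u : Metric.sphere (0 : EuclideanSpace ℝ (Fin d)) 1,
    (ρ {y | ⟪(u : EuclideanSpace ℝ (Fin d)), y⟫ ≤ ⟪(u : EuclideanSpace ℝ (Fin d)), x⟫}).toReal

/-- The `α`-depth region of the halfspace depth. -/
def hdRegion (d : ℕ) (ρ : Measure (EuclideanSpace ℝ (Fin d))) (α : ℝ) :
    Set (EuclideanSpace ℝ (Fin d)) :=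
  {x | α ≤ halfspaceDepth d ρ x}

/-- The quadratic form `u ↦ uᵀ Σ u` of a matrix `Σ` on `ℝ^d`. -/
def quadForm (d : ℕ) (S : Matrix (Fin d) (Fin d) ℝ) (u : EuclideanSpace ℝ (Fin d)) : ℝ :=
  dotProduct (fun i => u i) (S.mulVec (fun i => u i))

/-- The depth-region discrepancy `DR_{p,ε}` (with `α* = 1/2`, the maximal halfspace
depth of a Gaussian measure) computed with the halfspace depth. -/
noncomputable def DRpe (d : ℕ) (p ε : ℝ)
    (μ ν : Measure (EuclideanSpace ℝ (Fin d))) : ℝ :=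
  ((1 / 2 - ε)⁻¹ * ∫ α in ε..(1 / 2),
    (Metric.hausdorffDist (hdRegion d μ α) (hdRegion d ν α)) ^ p) ^ (1 / p)

open Set Filter Topology Metric Bornology
open scoped NNReal

section aux
variable {d : ℕ} {S : Matrix (Fin d) (Fin d) ℝ}

lemma gauss_shift (m c t : ℝ) (v : ℝ≥0) :
    gaussianReal (m + c) v (Iic (t + c)) = gaussianReal m v (Iic t) := by
  rw [← gaussianReal_map_add_const c,
    Measure.map_apply (measurable_add_const c) measurableSet_Iic]
  congr 1
  ext x
  simp [Set.mem_Iic]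

lemma gauss_center (m : ℝ) (v : ℝ≥0) (hv : v ≠ 0) :
    gaussianReal m v (Iic m) = 1/2 := by
  have hmap : (gaussianReal m v).map (fun x => -x + 2*m) = gaussianReal m v := by
    have h1 : (gaussianReal m v).map (fun x => -x) = gaussianReal (-m) v := by
      have := gaussianReal_map_const_mul (μ := m) (v := v) (-1)
      have h2 : (⟨(-1:ℝ)^2, sq_nonneg _⟩ : ℝ≥0) = 1 := by ext; norm_num
      simpa [h2] using this
    have h3 : (fun x : ℝ => -x + 2*m) = (fun x => x + 2*m) ∘ (fun x => -x) := rfl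
    rw [h3, ← Measure.map_map (measurable_add_const _) measurable_neg, h1,
      gaussianReal_map_add_const]
    congr 1
    ring
  have hIci : gaussianReal m v (Iic m) = gaussianReal m v (Ici m) := by
    conv_lhs => rw [← hmap]
    rw [Measure.map_apply (by fun_prop) measurableSet_Iic]
    congr 1
    ext x
    simp only [mem_preimage, mem_Iic, mem_Ici]
    constructor <;> intro h <;> linarith
  have hsingle : gaussianReal m v {m} = 0 :=
    gaussianReal_absolutelyContinuous m hv (measure_singleton m)
  have hIoi : gaussianReal m v (Ici m) = gaussianReal m v (Ioi m) := by
    apply le_antisymm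
    · calc gaussianReal m v (Ici m) ≤ gaussianReal m v ({m} ∪ Ioi m) := by
            apply measure_mono; intro x hx
            rcases eq_or_lt_of_le (mem_Ici.1 hx) with h | h
            · exact Or.inl (by simp [h.symm])
            · exact Or.inr h
          _ ≤ gaussianReal m v {m} + gaussianReal m v (Ioi m) := measure_union_le _ _
          _ = gaussianReal m v (Ioi m) := by rw [hsingle, zero_add]
    · exact measure_mono Ioi_subset_Ici_self
  have hcompl : gaussianReal m v (Iic m) + gaussianReal m v (Ioi m) = 1 := by
    rw [← measure_univ (μ := gaussianReal m v), ← Iic_union_Ioi (a := m)]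
    exact (measure_union (Iic_disjoint_Ioi le_rfl) measurableSet_Ioi).symm
  have h2 : gaussianReal m v (Iic m) + gaussianReal m v (Iic m) = 1 := by
    nth_rewrite 2 [hIci]
    rw [hIoi]
    exact hcompl
  have hne : gaussianReal m v (Iic m) ≠ ⊤ := measure_ne_top _ _
  rw [← two_mul] at h2
  rw [ENNReal.eq_div_iff (by norm_num) (by norm_num)]
  exact h2

lemma gauss_scale (v : ℝ≥0) (hv : v ≠ 0) (t : ℝ) :
    gaussianReal 0 v (Iic t) = gaussianReal 0 1 (Iic (t / Real.sqrt v)) := by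
  set c : ℝ := Real.sqrt v with hc
  have hcpos : 0 < c := Real.sqrt_pos.2 (by positivity)
  have hmap := gaussianReal_map_const_mul (μ := (0:ℝ)) (v := 1) c
  have hvv : (⟨c^2, sq_nonneg _⟩ : ℝ≥0) * 1 = v := by
    ext
    simp [hc, Real.sq_sqrt v.2]
  replace hmap : Measure.map (fun x => c * x) (gaussianReal 0 1) = gaussianReal 0 v := by
    rw [hmap, mul_zero]; congr 1
  rw [← hmap, Measure.map_apply (by fun_prop) measurableSet_Iic]
  congr 1
  ext x
  simp only [mem_preimage, mem_Iic]
  rw [le_div_iff₀ hcpos, mul_comm]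

lemma gauss_tail {α : ℝ} (hα : 0 < α) :
    ∃ s : ℝ, s < 0 ∧ ((gaussianReal 0 1 (Iic s)).toReal < α) := by
  have htend : Tendsto (fun n : ℕ => gaussianReal 0 1 (Iic (-(n:ℝ)))) atTop
      (𝓝 (gaussianReal 0 1 (⋂ n : ℕ, Iic (-(n:ℝ))))) := by
    apply tendsto_measure_iInter_atTop
    · exact fun n => measurableSet_Iic.nullMeasurableSet
    · intro a b hab
      apply Iic_subset_Iic.2
      simp [Nat.cast_le.2 hab]
    · exact ⟨0, measure_ne_top _ _⟩
  have hempty : (⋂ n : ℕ, Iic (-(n:ℝ))) = ∅ := by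
    ext x
    simp only [mem_iInter, mem_Iic, mem_empty_iff_false, iff_false, not_forall, not_le]
    obtain ⟨n, hn⟩ := exists_nat_gt (-x)
    exact ⟨n, by linarith⟩
  rw [hempty, measure_empty] at htend
  have htoReal : Tendsto (fun n : ℕ => (gaussianReal 0 1 (Iic (-(n:ℝ)))).toReal) atTop (𝓝 0) := by
    have := (ENNReal.tendsto_toReal (by norm_num)).comp htend
    simpa [Function.comp_def] using this
  have := (htoReal.eventually (eventually_lt_nhds hα)).exists
  obtain ⟨n, hn⟩ := this
  refine ⟨-(n:ℝ) - 1, by norm_num [Nat.cast_nonneg]; linarith [Nat.cast_nonneg (α := ℝ) n], ?_⟩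
  refine lt_of_le_of_lt ?_ hn
  apply ENNReal.toReal_mono (measure_ne_top _ _)
  apply measure_mono
  apply Iic_subset_Iic.2
  linarith

lemma haus_translate {d : ℕ} {A : Set (EuclideanSpace ℝ (Fin d))}
    (hne : A.Nonempty) (hbd : Bornology.IsBounded A) (v : EuclideanSpace ℝ (Fin d)) :
    Metric.hausdorffDist A ((· + v) '' A) = ‖v‖ := by
  have hiso : Isometry (fun x : EuclideanSpace ℝ (Fin d) => x + v) :=
    Isometry.of_dist_eq (fun a b => by simp [dist_eq_norm])
  have hne' : ((· + v) '' A).Nonempty := hne.image _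
  have hbd' : Bornology.IsBounded ((· + v) '' A) := hiso.lipschitz.isBounded_image hbd
  have hfin : EMetric.hausdorffEdist A ((· + v) '' A) ≠ ⊤ :=
    Metric.hausdorffEdist_ne_top_of_nonempty_of_bounded hne hne' hbd hbd'
  -- upper bound
  have hle : hausdorffDist A ((· + v) '' A) ≤ ‖v‖ := by
    apply hausdorffDist_le_of_mem_dist (norm_nonneg _)
    · intro x hx
      exact ⟨x + v, mem_image_of_mem _ hx, by simp [dist_eq_norm]⟩
    · rintro y ⟨x, hx, rfl⟩
      exact ⟨x, hx, by simp [dist_eq_norm]⟩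
  rcases eq_or_ne v 0 with rfl | hv
  · simp only [add_zero, image_id', norm_zero]
    exact Metric.hausdorffDist_self_zero
  -- lower bound
  have hAc : IsCompact (closure A) := hbd.isCompact_closure
  obtain ⟨a, haA, hamax⟩ := hAc.exists_isMaxOn hne.closure
    ((continuous_const.inner continuous_id).continuousOn :
      ContinuousOn (fun x : EuclideanSpace ℝ (Fin d) => ⟪v, x⟫) (closure A))
  have hkey : ∀ b ∈ A, ‖v‖ ≤ dist (a + v) b := by
    intro b hb
    have h1 : ⟪v, b⟫ ≤ ⟪v, a⟫ := hamax (subset_closure hb)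
    have h2 : ‖v‖^2 ≤ ⟪v, a + v - b⟫ := by
      rw [inner_sub_right, inner_add_right, real_inner_self_eq_norm_sq]
      linarith
    have h3 : ⟪v, a + v - b⟫ ≤ ‖v‖ * ‖a + v - b‖ := real_inner_le_norm _ _
    have hvpos : 0 < ‖v‖ := norm_pos_iff.2 hv
    rw [dist_eq_norm]
    nlinarith [norm_nonneg (a + v - b)]
  have hinf : ‖v‖ ≤ infDist (a + v) A := by
    have h5 : ENNReal.ofReal ‖v‖ ≤ EMetric.infEdist (a + v) A :=
      EMetric.le_infEdist.2 fun y hy => by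
        rw [edist_dist]; exact ENNReal.ofReal_le_ofReal (hkey y hy)
    have h6 : EMetric.infEdist (a + v) A ≠ ⊤ := by
      obtain ⟨b, hb⟩ := hne
      exact ((EMetric.infEdist_le_edist_of_mem hb).trans_lt (edist_lt_top _ _)).ne
    calc ‖v‖ = (ENNReal.ofReal ‖v‖).toReal := by rw [ENNReal.toReal_ofReal (norm_nonneg _)]
      _ ≤ (EMetric.infEdist (a + v) A).toReal := ENNReal.toReal_mono h6 h5
      _ = infDist (a + v) A := rfl
  have hmem : a + v ∈ closure ((· + v) '' A) := by
    exact image_closure_subset_closure_image (s := A) (f := (· + v)) hiso.continuous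
      (mem_image_of_mem _ haA)
  have hge : ‖v‖ ≤ hausdorffDist A ((· + v) '' A) := by
    have h4 : infDist (a + v) A ≤ hausdorffDist (closure ((· + v) '' A)) A := by
      apply infDist_le_hausdorffDist_of_mem hmem
      rw [EMetric.hausdorffEdist_closure₁, EMetric.hausdorffEdist_comm]
      exact hfin
    rw [Metric.hausdorffDist_closure₁, Metric.hausdorffDist_comm] at h4
    linarith
  linarith

lemma term_eq {ρ : Measure (EuclideanSpace ℝ (Fin d))} {m : EuclideanSpace ℝ (Fin d)}
    (hρ : ∀ u : EuclideanSpace ℝ (Fin d),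
      Measure.map (fun x => ⟪u, x⟫) ρ =
        gaussianReal ⟪u, m⟫ (Real.toNNReal (quadForm d S u)))
    (u x : EuclideanSpace ℝ (Fin d)) :
    ρ {y | ⟪u, y⟫ ≤ ⟪u, x⟫} =
      gaussianReal ⟪u, m⟫ (Real.toNNReal (quadForm d S u)) (Iic ⟪u, x⟫) := by
  have hmeas : Measurable (fun y : EuclideanSpace ℝ (Fin d) => ⟪u, y⟫) :=
    (continuous_const.inner continuous_id).measurable
  have hset : {y : EuclideanSpace ℝ (Fin d) | ⟪u, y⟫ ≤ ⟪u, x⟫} =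
      (fun y => ⟪u, y⟫) ⁻¹' (Iic ⟪u, x⟫) := rfl
  rw [hset, ← Measure.map_apply hmeas measurableSet_Iic, hρ u]

lemma quadForm_pos (hS : S.PosDef) {u : EuclideanSpace ℝ (Fin d)}
    (hu : u ≠ 0) : 0 < quadForm d S u := by
  have h : (fun i => u i) ≠ (0 : Fin d → ℝ) := by
    intro h
    apply hu
    ext i
    exact congrFun h i
  have := hS.dotProduct_mulVec_pos (x := fun i => u i) h
  simpa [quadForm] using this

lemma quadForm_le_bound {u : EuclideanSpace ℝ (Fin d)} (hu : ‖u‖ = 1) :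
    quadForm d S u ≤ ∑ i, ∑ j, |S i j| := by
  have habs : ∀ i, |u i| ≤ 1 := by
    intro i
    have h1 : ∑ j, ‖u j‖^2 = 1 := by
      have := EuclideanSpace.norm_eq u
      rw [hu] at this
      have h2 : Real.sqrt (∑ j, ‖u j‖^2) = 1 := this.symm
      have h0 : (0:ℝ) ≤ ∑ j, ‖u j‖^2 :=
        Finset.sum_nonneg fun j _ => sq_nonneg ‖u j‖
      nlinarith [Real.sq_sqrt h0, Real.sqrt_nonneg (∑ j, ‖u j‖^2)]
    have h3 : ‖u i‖^2 ≤ 1 := by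
      rw [← h1]
      exact Finset.single_le_sum (fun j _ => sq_nonneg ‖u j‖) (Finset.mem_univ i)
    have h4 : |u i| ^ 2 ≤ 1 ^ 2 := by
      rw [one_pow, sq_abs]
      simpa [Real.norm_eq_abs, sq_abs] using h3
    nlinarith [abs_nonneg (u i)]
  calc quadForm d S u ≤ |quadForm d S u| := le_abs_self _
    _ = |∑ i, u i * (S.mulVec (fun j => u j)) i| := by unfold quadForm dotProduct; rfl
    _ ≤ ∑ i, |u i * (S.mulVec (fun j => u j)) i| := Finset.abs_sum_le_sum_abs _ _
    _ ≤ ∑ i, ∑ j, |S i j| := by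
        apply Finset.sum_le_sum
        intro i _
        rw [abs_mul]
        calc |u i| * |(S.mulVec (fun j => u j)) i|
            ≤ 1 * |∑ j, S i j * u j| := by
              apply mul_le_mul (habs i) le_rfl (abs_nonneg _) zero_le_one
          _ = |∑ j, S i j * u j| := one_mul _
          _ ≤ ∑ j, |S i j * u j| := Finset.abs_sum_le_sum_abs _ _
          _ ≤ ∑ j, |S i j| := by
              apply Finset.sum_le_sum
              intro j _
              rw [abs_mul]
              calc |S i j| * |u j| ≤ |S i j| * 1 :=
                    mul_le_mul_of_nonneg_left (habs j) (abs_nonneg _)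
                _ = |S i j| := mul_one _

lemma depth_shift {μ ν : Measure (EuclideanSpace ℝ (Fin d))}
    {m₁ m₂ : EuclideanSpace ℝ (Fin d)}
    (hμ : ∀ u : EuclideanSpace ℝ (Fin d),
      Measure.map (fun x => ⟪u, x⟫) μ =
        gaussianReal ⟪u, m₁⟫ (Real.toNNReal (quadForm d S u)))
    (hν : ∀ u : EuclideanSpace ℝ (Fin d),
      Measure.map (fun x => ⟪u, x⟫) ν =
        gaussianReal ⟪u, m₂⟫ (Real.toNNReal (quadForm d S u)))
    (x : EuclideanSpace ℝ (Fin d)) :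
    halfspaceDepth d ν (x + (m₂ - m₁)) = halfspaceDepth d μ x := by
  unfold halfspaceDepth
  apply iInf_congr
  intro u
  congr 1
  rw [term_eq hν, term_eq hμ]
  have h1 : ⟪(u : EuclideanSpace ℝ (Fin d)), x + (m₂ - m₁)⟫ =
      ⟪(u : EuclideanSpace ℝ (Fin d)), x⟫ + ⟪(u : EuclideanSpace ℝ (Fin d)), m₂ - m₁⟫ :=
    inner_add_right _ _ _
  have h2 : ⟪(u : EuclideanSpace ℝ (Fin d)), m₂⟫ =
      ⟪(u : EuclideanSpace ℝ (Fin d)), m₁⟫ + ⟪(u : EuclideanSpace ℝ (Fin d)), m₂ - m₁⟫ := by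
    rw [← inner_add_right]
    congr 1
    abel
  rw [h1, h2, gauss_shift]

lemma region_shift {μ ν : Measure (EuclideanSpace ℝ (Fin d))}
    {m₁ m₂ : EuclideanSpace ℝ (Fin d)}
    (hμ : ∀ u : EuclideanSpace ℝ (Fin d),
      Measure.map (fun x => ⟪u, x⟫) μ =
        gaussianReal ⟪u, m₁⟫ (Real.toNNReal (quadForm d S u)))
    (hν : ∀ u : EuclideanSpace ℝ (Fin d),
      Measure.map (fun x => ⟪u, x⟫) ν =
        gaussianReal ⟪u, m₂⟫ (Real.toNNReal (quadForm d S u)))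
    (α : ℝ) :
    hdRegion d ν α = (· + (m₂ - m₁)) '' hdRegion d μ α := by
  ext x
  simp only [hdRegion, Set.mem_setOf_eq, Set.mem_image]
  constructor
  · intro hx
    refine ⟨x - (m₂ - m₁), ?_, by abel⟩
    rw [← depth_shift hμ hν]
    convert hx using 2
    abel
  · rintro ⟨y, hy, rfl⟩
    rw [depth_shift hμ hν]
    exact hy

lemma sphere_ne_zero {u : EuclideanSpace ℝ (Fin d)}
    (hu : u ∈ Metric.sphere (0 : EuclideanSpace ℝ (Fin d)) 1) : u ≠ 0 := by
  intro h
  rw [Metric.mem_sphere, dist_zero_right, h, norm_zero] at hu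
  exact one_ne_zero hu.symm

lemma mean_mem_region (hS : S.PosDef) {μ : Measure (EuclideanSpace ℝ (Fin d))}
    {m₁ : EuclideanSpace ℝ (Fin d)} [Nonempty (Metric.sphere (0 : EuclideanSpace ℝ (Fin d)) 1)]
    (hμ : ∀ u : EuclideanSpace ℝ (Fin d),
      Measure.map (fun x => ⟪u, x⟫) μ =
        gaussianReal ⟪u, m₁⟫ (Real.toNNReal (quadForm d S u)))
    {α : ℝ} (hα : α ≤ 1/2) : m₁ ∈ hdRegion d μ α := by
  rw [hdRegion, Set.mem_setOf_eq, halfspaceDepth]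
  apply le_ciInf
  intro u
  rw [term_eq hμ]
  have hq : 0 < quadForm d S (u : EuclideanSpace ℝ (Fin d)) :=
    quadForm_pos hS (sphere_ne_zero u.2)
  have hv : (Real.toNNReal (quadForm d S (u : EuclideanSpace ℝ (Fin d)))) ≠ 0 := by
    simp [Real.toNNReal_eq_zero, not_le, hq]
  rw [gauss_center _ _ hv]
  rw [ENNReal.toReal_div]
  simp only [ENNReal.toReal_one, ENNReal.toReal_ofNat]
  linarith

lemma region_bounded (hS : S.PosDef) {μ : Measure (EuclideanSpace ℝ (Fin d))}
    {m₁ : EuclideanSpace ℝ (Fin d)}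
    (hμ : ∀ u : EuclideanSpace ℝ (Fin d),
      Measure.map (fun x => ⟪u, x⟫) μ =
        gaussianReal ⟪u, m₁⟫ (Real.toNNReal (quadForm d S u)))
    {α : ℝ} (hα : 0 < α) : Bornology.IsBounded (hdRegion d μ α) := by
  obtain ⟨s, hs0, hsα⟩ := gauss_tail hα
  set C : ℝ := ∑ i, ∑ j, |S i j| with hC
  have hC0 : 0 ≤ C := Finset.sum_nonneg fun i _ => Finset.sum_nonneg fun j _ => abs_nonneg _
  set R : ℝ := -s * Real.sqrt (C + 1) with hR
  have hR0 : 0 ≤ R := mul_nonneg (by linarith) (Real.sqrt_nonneg _)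
  apply Bornology.IsBounded.subset (Metric.isBounded_closedBall (x := m₁) (r := R))
  intro x hx
  rw [Metric.mem_closedBall, dist_eq_norm]
  by_contra hgt
  push_neg at hgt
  set r : ℝ := ‖x - m₁‖ with hr
  have hrpos : 0 < r := lt_of_le_of_lt hR0 hgt
  set u : EuclideanSpace ℝ (Fin d) := r⁻¹ • (m₁ - x) with hu
  have hnu : ‖u‖ = 1 := by
    rw [hu, norm_smul, norm_sub_rev, ← hr, Real.norm_eq_abs, abs_inv,
      abs_of_pos hrpos, inv_mul_cancel₀ hrpos.ne']
  have humem : u ∈ Metric.sphere (0 : EuclideanSpace ℝ (Fin d)) 1 := by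
    rw [mem_sphere_zero_iff_norm]; exact hnu
  -- depth at x is at most the term at u
  have hdepth : halfspaceDepth d μ x ≤
      (μ {y | ⟪u, y⟫ ≤ ⟪u, x⟫}).toReal := by
    rw [halfspaceDepth]
    exact ciInf_le ⟨0, by rintro _ ⟨w, rfl⟩; exact ENNReal.toReal_nonneg⟩
      (⟨u, humem⟩ : Metric.sphere (0 : EuclideanSpace ℝ (Fin d)) 1)
  have hip : ⟪u, x⟫ = ⟪u, m₁⟫ + (-r) := by
    have h1 : ⟪u, x⟫ - ⟪u, m₁⟫ = ⟪u, x - m₁⟫ := (inner_sub_right _ _ _).symm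
    have h2 : ⟪u, x - m₁⟫ = -r := by
      rw [hu, real_inner_smul_left]
      have h3 : (m₁ - x : EuclideanSpace ℝ (Fin d)) = -(x - m₁) := by abel
      rw [h3, inner_neg_left, real_inner_self_eq_norm_sq, ← hr]
      field_simp
    linarith [h1, h2]
  have hq : 0 < quadForm d S u := quadForm_pos hS (sphere_ne_zero humem)
  set V : ℝ≥0 := Real.toNNReal (quadForm d S u) with hV
  have hVne : V ≠ 0 := by simp [hV, Real.toNNReal_eq_zero, not_le, hq]
  have hVval : (V : ℝ) = quadForm d S u := Real.coe_toNNReal _ hq.le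
  have hVC : (V : ℝ) ≤ C + 1 := by
    rw [hVval]
    linarith [quadForm_le_bound (S := S) hnu]
  -- rewrite the term
  have hterm : μ {y | ⟪u, y⟫ ≤ ⟪u, x⟫} = gaussianReal 0 1 (Iic (-r / Real.sqrt V)) := by
    rw [term_eq hμ, hip]
    have := gauss_shift 0 ⟪u, m₁⟫ (-r) V
    rw [zero_add] at this
    rw [add_comm (⟪u, m₁⟫) (-r)] at *
    rw [this, gauss_scale V hVne]
  have hle : -r / Real.sqrt V ≤ s := by
    have hsV : 0 < Real.sqrt V := Real.sqrt_pos.2 (by rw [hVval]; exact hq)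
    rw [div_le_iff₀ hsV]
    have h5 : Real.sqrt V ≤ Real.sqrt (C + 1) := Real.sqrt_le_sqrt hVC
    have h6 : s * Real.sqrt (C + 1) ≤ s * Real.sqrt V := by
      apply mul_le_mul_of_nonpos_left h5 hs0.le
    have h7 : -r < s * Real.sqrt (C + 1) := by
      rw [hR] at hgt
      linarith
    linarith
  have hfinal : (μ {y | ⟪u, y⟫ ≤ ⟪u, x⟫}).toReal < α := by
    rw [hterm]
    refine lt_of_le_of_lt ?_ hsα
    apply ENNReal.toReal_mono (measure_ne_top _ _)
    exact measure_mono (Iic_subset_Iic.2 hle)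
  have hxα : α ≤ halfspaceDepth d μ x := hx
  linarith

end aux

theorem stmt_19 (d : ℕ)
    (m₁ m₂ : EuclideanSpace ℝ (Fin d)) (S : Matrix (Fin d) (Fin d) ℝ) (hS : S.PosDef)
    (μ ν : Measure (EuclideanSpace ℝ (Fin d)))
    [IsProbabilityMeasure μ] [IsProbabilityMeasure ν]
    -- `μ = N(m₁, Σ)` and `ν = N(m₂, Σ)` with the same covariance `Σ`
    (hμ : ∀ u : EuclideanSpace ℝ (Fin d),
      Measure.map (fun x => ⟪u, x⟫) μ =
        gaussianReal ⟪u, m₁⟫ (Real.toNNReal (quadForm d S u)))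
    (hν : ∀ u : EuclideanSpace ℝ (Fin d),
      Measure.map (fun x => ⟪u, x⟫) ν =
        gaussianReal ⟪u, m₂⟫ (Real.toNNReal (quadForm d S u)))
    (ε : ℝ) (hε : 0 ≤ ε) (hε2 : ε < 1 / 2) :
    DRpe d 2 ε μ ν = ‖m₁ - m₂‖ ∧
    DRpe d 1 ε μ ν = ‖m₁ - m₂‖ ∧
    ∀ α ∈ Set.Ioc ε (1 / 2 : ℝ),
      Metric.hausdorffDist (hdRegion d μ α) (hdRegion d ν α) = ‖m₁ - m₂‖ := by
  have hmain : ∀ α ∈ Set.Ioc ε (1 / 2 : ℝ),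
      Metric.hausdorffDist (hdRegion d μ α) (hdRegion d ν α) = ‖m₁ - m₂‖ := by
    intro α hα
    obtain ⟨hα1, hα2⟩ := hα
    have hα0 : 0 < α := lt_of_le_of_lt hε hα1
    by_cases hd : d = 0
    · subst hd
      have hm : m₁ = m₂ := by
        ext i
        exact i.elim0
      have hempty : ∀ ρ : Measure (EuclideanSpace ℝ (Fin 0)),
          hdRegion 0 ρ α = ∅ := by
        intro ρ
        ext x
        simp only [hdRegion, Set.mem_setOf_eq, Set.mem_empty_iff_false, iff_false, not_le]
        have hie : IsEmpty (Metric.sphere (0 : EuclideanSpace ℝ (Fin 0)) 1) := by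
          constructor
          rintro ⟨u, hu⟩
          rw [mem_sphere_zero_iff_norm] at hu
          have : u = 0 := by ext i; exact i.elim0
          rw [this, norm_zero] at hu
          exact one_ne_zero hu.symm
        rw [halfspaceDepth, @Real.iInf_of_isEmpty _ hie]
        exact hα0
      rw [hempty μ, hempty ν, hm, sub_self, norm_zero]
      exact Metric.hausdorffDist_self_zero
    · have hd' : 0 < d := Nat.pos_of_ne_zero hd
      haveI : Nonempty (Metric.sphere (0 : EuclideanSpace ℝ (Fin d)) 1) := by
        refine ⟨⟨EuclideanSpace.single ⟨0, hd'⟩ (1 : ℝ), ?_⟩⟩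
        rw [mem_sphere_zero_iff_norm, EuclideanSpace.norm_single]
        norm_num
      have hne : (hdRegion d μ α).Nonempty :=
        ⟨m₁, mean_mem_region hS hμ hα2⟩
      have hbd : Bornology.IsBounded (hdRegion d μ α) := region_bounded hS hμ hα0
      rw [region_shift hμ hν, haus_translate hne hbd, norm_sub_rev]
  have hDR : ∀ p : ℝ, 0 < p → DRpe d p ε μ ν = ‖m₁ - m₂‖ := by
    intro p hp
    rw [DRpe]
    have hint : (∫ α in ε..(1 / 2),
        (Metric.hausdorffDist (hdRegion d μ α) (hdRegion d ν α)) ^ p) =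
        (1 / 2 - ε) * ‖m₁ - m₂‖ ^ p := by
      rw [intervalIntegral.integral_of_le hε2.le]
      rw [setIntegral_congr_fun measurableSet_Ioc
        (g := fun _ => ‖m₁ - m₂‖ ^ p) (fun α hα => by rw [hmain α hα])]
      rw [setIntegral_const, Real.volume_real_Ioc_of_le (by linarith),
        smul_eq_mul]
    rw [hint, inv_mul_cancel_left₀ (by linarith : (1:ℝ)/2 - ε ≠ 0),
      ← Real.rpow_mul (norm_nonneg _), mul_one_div_cancel hp.ne', Real.rpow_one]
  exact ⟨hDR 2 (by norm_num), hDR 1 (by norm_num), hmain⟩
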